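/- Suppose μ12 ≥ μ22, let (a1, a2, b) be a balance triple, and set β = min(θ1, θ2). Let (x, p) = ((q1, q2, z), p) be a controlled solution such that q1(t) ≥ a1, q2(t) ≥ a2 and z(t) ≥ b for all t ≥ 0. Then for all t ≥ 0, (q1(t) − a1) + (q2(t) − a2) ≤ ((q1(0) − a1) + (q2(0) − a2))·exp(−β·t). -/

import Mathlib

/-- When `mu12 ≥ mu22`, the sum of queue deviations decays exponentially with
rate `min th1 th2` along a controlled solution staying above a balance triple. -/
theorem stmt_14 (lam1 lam2 m1 m2 mu11 mu12 mu22 th1 th2 r kap : ℝ)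
    (hlam1 : 0 < lam1) (hlam2 : 0 < lam2) (hm1 : 0 < m1) (hm2 : 0 < m2)
    (hmu11 : 0 < mu11) (hmu12 : 0 < mu12) (hmu22 : 0 < mu22)
    (hth1 : 0 < th1) (hth2 : 0 < th2) (hr : 0 < r) (hkap : 0 ≤ kap)
    (hmu : mu22 ≤ mu12)
    (a1 a2 b : ℝ)
    (hbal1 : th1*a1 = lam1 - m1*mu11 - mu12*b)
    (hbal2 : th2*a2 = lam2 - mu22*(m2 - b))
    (beta : ℝ) (hbeta : beta = min th1 th2)
    (q1 q2 z p : ℝ → ℝ)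
    (hp : ∀ t, 0 ≤ t → 0 ≤ p t ∧ p t ≤ 1)
    (hq1' : ∀ t, 0 ≤ t →
      HasDerivAt q1 (lam1 - m1*mu11 - p t*(z t*mu12 + (m2 - z t)*mu22) - th1*q1 t) t)
    (hq2' : ∀ t, 0 ≤ t →
      HasDerivAt q2 (lam2 - (1 - p t)*(z t*mu12 + (m2 - z t)*mu22) - th2*q2 t) t)
    (hz' : ∀ t, 0 ≤ t →
      HasDerivAt z (p t*mu22*(m2 - z t) - (1 - p t)*mu12*z t) t)
    (hq1ge : ∀ t, 0 ≤ t → a1 ≤ q1 t)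
    (hq2ge : ∀ t, 0 ≤ t → a2 ≤ q2 t)
    (hzge : ∀ t, 0 ≤ t → b ≤ z t) :
    ∀ t, 0 ≤ t →
      (q1 t - a1) + (q2 t - a2) ≤
        ((q1 0 - a1) + (q2 0 - a2)) * Real.exp (-beta*t) := by

  have hb1 : beta ≤ th1 := by rw [hbeta]; exact min_le_left _ _
  have hb2 : beta ≤ th2 := by rw [hbeta]; exact min_le_right _ _
  set W : ℝ → ℝ := fun s => (q1 s - a1 + (q2 s - a2)) * Real.exp (beta * s) with hW
  have hWderiv : ∀ s, 0 ≤ s → HasDerivAt W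
      (((lam1 - m1*mu11 - p s*(z s*mu12 + (m2 - z s)*mu22) - th1*q1 s)
        + (lam2 - (1 - p s)*(z s*mu12 + (m2 - z s)*mu22) - th2*q2 s)
        + beta * (q1 s - a1 + (q2 s - a2))) * Real.exp (beta * s)) s := by
    intro s hs
    have h1 := (hq1' s hs).sub_const a1
    have h2 := (hq2' s hs).sub_const a2
    have hsum := h1.add h2
    have hexp : HasDerivAt (fun u => Real.exp (beta * u)) (beta * Real.exp (beta * s)) s := by
      have := (Real.hasDerivAt_exp (beta * s)).comp s ((hasDerivAt_id s).const_mul beta)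
      simpa [mul_comm, Function.comp_def] using this
    have := hsum.mul hexp
    refine this.congr_deriv ?_
    simp only [Pi.add_apply]
    ring
  have hWd_nonpos : ∀ s, 0 ≤ s →
      (((lam1 - m1*mu11 - p s*(z s*mu12 + (m2 - z s)*mu22) - th1*q1 s)
        + (lam2 - (1 - p s)*(z s*mu12 + (m2 - z s)*mu22) - th2*q2 s)
        + beta * (q1 s - a1 + (q2 s - a2))) * Real.exp (beta * s)) ≤ 0 := by
    intro s hs
    have hq1s := hq1ge s hs
    have hq2s := hq2ge s hs
    have hzs := hzge s hs
    have hexp : (0:ℝ) < Real.exp (beta * s) := Real.exp_pos _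
    have hkey : ((lam1 - m1*mu11 - p s*(z s*mu12 + (m2 - z s)*mu22) - th1*q1 s)
        + (lam2 - (1 - p s)*(z s*mu12 + (m2 - z s)*mu22) - th2*q2 s)
        + beta * (q1 s - a1 + (q2 s - a2))) ≤ 0 := by
      nlinarith [mul_nonneg (sub_nonneg.2 hmu) (sub_nonneg.2 hzs),
        mul_nonneg (sub_nonneg.2 hb1) (sub_nonneg.2 hq1s),
        mul_nonneg (sub_nonneg.2 hb2) (sub_nonneg.2 hq2s)]
    exact mul_nonpos_of_nonpos_of_nonneg hkey hexp.le
  have hcont : ContinuousOn W (Set.Ici 0) := fun s hs =>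
    ((hWderiv s hs).differentiableAt.continuousAt).continuousWithinAt
  have hanti : AntitoneOn W (Set.Ici 0) := by
    apply antitoneOn_of_deriv_nonpos (convex_Ici 0) hcont
    · intro x hx
      rw [interior_Ici] at hx
      exact ((hWderiv x (le_of_lt hx)).differentiableAt).differentiableWithinAt
    · intro x hx
      rw [interior_Ici] at hx
      rw [(hWderiv x (le_of_lt hx)).deriv]
      exact hWd_nonpos x (le_of_lt hx)
  intro t ht
  have hWt : W t ≤ W 0 := hanti Set.self_mem_Ici ht ht
  have hW0 : W 0 = q1 0 - a1 + (q2 0 - a2) := by simp [hW]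
  have hexpt : (0:ℝ) < Real.exp (beta * t) := Real.exp_pos _
  have hmain : (q1 t - a1 + (q2 t - a2)) * Real.exp (beta * t)
      ≤ q1 0 - a1 + (q2 0 - a2) := by rw [← hW0]; exact hWt
  rw [neg_mul, Real.exp_neg, ← div_eq_mul_inv, le_div_iff₀ hexpt]
  exact hmain
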